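/- arXiv:2603.27906 — 2 statements merged into one kernel-verified Lean document; each statement's English description precedes it below -/
import Mathlib

section
/- Fix a dimer cover (perfect matching) of the Aztec diamond graph of size N. For each i ∈ {0,…,N}, exactly N - i of the black vertices on level 2i (those with first coordinate 2i) are matched to a south or west edge. -/
open scoped Classical

/-- Black vertices of the Aztec diamond graph of size `N`. -/
def AzBlack (N : ℕ) (v : ℤ × ℤ) : Prop :=
  ∃ i j : ℤ, 0 ≤ i ∧ i ≤ N ∧ 0 ≤ j ∧ j ≤ (N : ℤ) - 1 ∧ v = (2 * i, 2 * j + 1)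

/-- White vertices of the Aztec diamond graph of size `N`. -/
def AzWhite (N : ℕ) (v : ℤ × ℤ) : Prop :=
  ∃ i j : ℤ, 0 ≤ i ∧ i ≤ (N : ℤ) - 1 ∧ 0 ≤ j ∧ j ≤ N ∧ v = (2 * i + 1, 2 * j)

/-- Edges of the Aztec diamond graph, recorded as (white, black) pairs: both
coordinates differ by exactly 1. -/
def AzEdge (N : ℕ) (w b : ℤ × ℤ) : Prop :=
  AzWhite N w ∧ AzBlack N b ∧ |w.1 - b.1| = 1 ∧ |w.2 - b.2| = 1

/-- A dimer cover of the Aztec diamond graph of size `N`: a set of edges such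
that every white vertex and every black vertex is incident to exactly one edge. -/
def IsDimerCover (N : ℕ) (M : Finset ((ℤ × ℤ) × (ℤ × ℤ))) : Prop :=
  (∀ e ∈ M, AzEdge N e.1 e.2) ∧
  (∀ w : ℤ × ℤ, AzWhite N w → (M.filter (fun e => e.1 = w)).card = 1) ∧
  (∀ b : ℤ × ℤ, AzBlack N b → (M.filter (fun e => e.2 = b)).card = 1)

/-- A black vertex `b` is matched by `M` to a south or west edge iff the white
vertex of its dimer lies to its right (first coordinate `b.1 + 1`). -/
def SWmatched (M : Finset ((ℤ × ℤ) × (ℤ × ℤ))) (b : ℤ × ℤ) : Prop :=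
  ∃ e ∈ M, e.2 = b ∧ e.1.1 = b.1 + 1

/-- Generic fiber-counting lemma. -/
lemma count_col {E V : Type*} [DecidableEq V] (M : Finset E) (p : E → V)
    (P : E → Prop) [DecidablePred P] (t : Finset V)
    (h1 : ∀ e ∈ M, P e → p e ∈ t)
    (h2 : ∀ b ∈ t, (M.filter (fun e => p e = b)).card = 1)
    (h3 : ∀ b ∈ t, ∀ e, p e = b → P e) :
    (M.filter P).card = t.card := by
  classical
  rw [Finset.card_eq_sum_card_fiberwise (f := p) (t := t)
    (fun e he => h1 e (Finset.mem_filter.mp he).1 (Finset.mem_filter.mp he).2)]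
  have key : ∀ b ∈ t, ((M.filter P).filter (fun e => p e = b))
      = M.filter (fun e => p e = b) := by
    intro b hb
    ext e
    simp only [Finset.mem_filter]
    exact ⟨fun h => ⟨h.1.1, h.2⟩, fun h => ⟨⟨h.1, h3 b hb e h.2⟩, h.2⟩⟩
  rw [Finset.sum_congr rfl (fun b hb => by rw [key b hb, h2 b hb])]
  simp

/-- Number of SW-matched black vertices in column `2 i`. -/
noncomputable def Fc (M : Finset ((ℤ × ℤ) × (ℤ × ℤ))) (i : ℤ) : ℕ :=
  (M.filter (fun e => e.2.1 = 2 * i ∧ e.1.1 = 2 * i + 1)).card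

/-- Number of NE-matched black vertices in column `2 i`. -/
noncomputable def Gc (M : Finset ((ℤ × ℤ) × (ℤ × ℤ))) (i : ℤ) : ℕ :=
  (M.filter (fun e => e.2.1 = 2 * i ∧ e.1.1 = 2 * i - 1)).card

lemma black_col {N : ℕ} {M : Finset ((ℤ × ℤ) × (ℤ × ℤ))} (hM : IsDimerCover N M)
    (i : ℤ) (h0 : 0 ≤ i) (hN : i ≤ N) :
    (M.filter (fun e => e.2.1 = 2 * i)).card = N := by
  have hinj : Function.Injective (fun j : ℕ => ((2 * i, 2 * (j : ℤ) + 1) : ℤ × ℤ)) := by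
    intro a b h
    simp only [Prod.mk.injEq] at h
    omega
  have h1 : ∀ e ∈ M, (fun e : (ℤ × ℤ) × (ℤ × ℤ) => e.2.1 = 2 * i) e →
      e.2 ∈ (Finset.range N).image (fun j : ℕ => ((2 * i, 2 * (j : ℤ) + 1) : ℤ × ℤ)) := by
    intro e he hP
    obtain ⟨_, ⟨i', j', _, _, hj0, hjN, hb⟩, _, _⟩ := hM.1 e he
    simp only [Finset.mem_image, Finset.mem_range]
    refine ⟨j'.toNat, by omega, ?_⟩
    rw [hb] at hP ⊢
    simp only at hP
    simp only [Prod.mk.injEq]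
    omega
  have h2 : ∀ b ∈ (Finset.range N).image (fun j : ℕ => ((2 * i, 2 * (j : ℤ) + 1) : ℤ × ℤ)),
      (M.filter (fun e => e.2 = b)).card = 1 := by
    intro b hb
    simp only [Finset.mem_image, Finset.mem_range] at hb
    obtain ⟨j, hj, rfl⟩ := hb
    exact hM.2.2 _ ⟨i, (j : ℤ), h0, hN, by omega, by omega, rfl⟩
  have h3 : ∀ b ∈ (Finset.range N).image (fun j : ℕ => ((2 * i, 2 * (j : ℤ) + 1) : ℤ × ℤ)),
      ∀ e : (ℤ × ℤ) × (ℤ × ℤ), e.2 = b → e.2.1 = 2 * i := by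
    intro b hb e hpe
    simp only [Finset.mem_image, Finset.mem_range] at hb
    obtain ⟨j, hj, rfl⟩ := hb
    rw [hpe]
  rw [count_col M (fun e => e.2) _ _ h1 h2 h3,
    Finset.card_image_of_injective _ hinj, Finset.card_range]

lemma white_col {N : ℕ} {M : Finset ((ℤ × ℤ) × (ℤ × ℤ))} (hM : IsDimerCover N M)
    (i : ℤ) (h0 : 0 ≤ i) (hN : i ≤ (N : ℤ) - 1) :
    (M.filter (fun e => e.1.1 = 2 * i + 1)).card = N + 1 := by
  have hinj : Function.Injective (fun j : ℕ => ((2 * i + 1, 2 * (j : ℤ)) : ℤ × ℤ)) := by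
    intro a b h
    simp only [Prod.mk.injEq] at h
    omega
  have h1 : ∀ e ∈ M, (fun e : (ℤ × ℤ) × (ℤ × ℤ) => e.1.1 = 2 * i + 1) e →
      e.1 ∈ (Finset.range (N + 1)).image (fun j : ℕ => ((2 * i + 1, 2 * (j : ℤ)) : ℤ × ℤ)) := by
    intro e he hP
    obtain ⟨⟨i', j', _, _, hj0, hjN, hw⟩, _, _, _⟩ := hM.1 e he
    simp only [Finset.mem_image, Finset.mem_range]
    refine ⟨j'.toNat, by omega, ?_⟩
    rw [hw] at hP ⊢
    simp only at hP
    simp only [Prod.mk.injEq]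
    omega
  have h2 : ∀ w ∈ (Finset.range (N + 1)).image (fun j : ℕ => ((2 * i + 1, 2 * (j : ℤ)) : ℤ × ℤ)),
      (M.filter (fun e => e.1 = w)).card = 1 := by
    intro w hw
    simp only [Finset.mem_image, Finset.mem_range] at hw
    obtain ⟨j, hj, rfl⟩ := hw
    exact hM.2.1 _ ⟨i, (j : ℤ), h0, hN, by omega, by omega, rfl⟩
  have h3 : ∀ w ∈ (Finset.range (N + 1)).image (fun j : ℕ => ((2 * i + 1, 2 * (j : ℤ)) : ℤ × ℤ)),
      ∀ e : (ℤ × ℤ) × (ℤ × ℤ), e.1 = w → e.1.1 = 2 * i + 1 := by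
    intro w hw e hpe
    simp only [Finset.mem_image, Finset.mem_range] at hw
    obtain ⟨j, hj, rfl⟩ := hw
    rw [hpe]
  rw [count_col M (fun e => e.1) _ _ h1 h2 h3,
    Finset.card_image_of_injective _ hinj, Finset.card_range]

lemma FG_black {N : ℕ} {M : Finset ((ℤ × ℤ) × (ℤ × ℤ))} (hM : IsDimerCover N M)
    (i : ℤ) (h0 : 0 ≤ i) (hN : i ≤ N) :
    Fc M i + Gc M i = N := by
  have hsplit := Finset.card_filter_add_card_filter_not
    (s := M.filter (fun e => e.2.1 = 2 * i)) (p := fun e => e.1.1 = 2 * i + 1)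
  rw [black_col hM i h0 hN] at hsplit
  rw [Finset.filter_filter, Finset.filter_filter] at hsplit
  have hG : (M.filter (fun e => e.2.1 = 2 * i ∧ ¬e.1.1 = 2 * i + 1))
      = M.filter (fun e => e.2.1 = 2 * i ∧ e.1.1 = 2 * i - 1) := by
    apply Finset.filter_congr
    intro e he
    have habs := (hM.1 e he).2.2.1
    rw [abs_eq (by norm_num : (0:ℤ) ≤ 1)] at habs
    constructor
    · rintro ⟨ha, hb⟩; exact ⟨ha, by omega⟩
    · rintro ⟨ha, hb⟩; exact ⟨ha, by omega⟩
  rw [hG] at hsplit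
  exact hsplit

lemma FG_white {N : ℕ} {M : Finset ((ℤ × ℤ) × (ℤ × ℤ))} (hM : IsDimerCover N M)
    (i : ℤ) (h0 : 0 ≤ i) (hN : i ≤ (N : ℤ) - 1) :
    Fc M i + Gc M (i + 1) = N + 1 := by
  have hsplit := Finset.card_filter_add_card_filter_not
    (s := M.filter (fun e => e.1.1 = 2 * i + 1)) (p := fun e => e.2.1 = 2 * i)
  rw [white_col hM i h0 hN] at hsplit
  rw [Finset.filter_filter, Finset.filter_filter] at hsplit
  have hF : (M.filter (fun e => e.1.1 = 2 * i + 1 ∧ e.2.1 = 2 * i))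
      = M.filter (fun e => e.2.1 = 2 * i ∧ e.1.1 = 2 * i + 1) := by
    apply Finset.filter_congr
    intro e he
    constructor
    · rintro ⟨ha, hb⟩; exact ⟨hb, ha⟩
    · rintro ⟨ha, hb⟩; exact ⟨hb, ha⟩
  have hG : (M.filter (fun e => e.1.1 = 2 * i + 1 ∧ ¬e.2.1 = 2 * i))
      = M.filter (fun e => e.2.1 = 2 * (i + 1) ∧ e.1.1 = 2 * (i + 1) - 1) := by
    apply Finset.filter_congr
    intro e he
    have habs := (hM.1 e he).2.2.1
    rw [abs_eq (by norm_num : (0:ℤ) ≤ 1)] at habs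
    constructor
    · rintro ⟨ha, hb⟩; constructor <;> omega
    · rintro ⟨ha, hb⟩; constructor <;> omega
  rw [hF, hG] at hsplit
  exact hsplit

lemma G_zero {N : ℕ} {M : Finset ((ℤ × ℤ) × (ℤ × ℤ))} (hM : IsDimerCover N M) :
    Gc M 0 = 0 := by
  rw [Gc, Finset.card_eq_zero, Finset.filter_eq_empty_iff]
  intro e he
  obtain ⟨⟨i', j', hi0, _, _, _, hw⟩, _, _, _⟩ := hM.1 e he
  rw [hw]
  simp only [not_and]
  intro _
  omega

lemma F_val {N : ℕ} {M : Finset ((ℤ × ℤ) × (ℤ × ℤ))} (hM : IsDimerCover N M) :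
    ∀ i : ℕ, i ≤ N → Fc M (i : ℤ) = N - i := by
  intro i
  induction i with
  | zero =>
    intro _
    have h1 := FG_black hM 0 le_rfl (by exact_mod_cast Nat.zero_le N)
    have h2 := G_zero hM
    simp only [Nat.cast_zero] at h1 ⊢
    omega
  | succ i ih =>
    intro hi
    have hIH := ih (by omega)
    have h1 := FG_white hM (i : ℤ) (by omega) (by omega)
    have h2 := FG_black hM ((i : ℤ) + 1) (by omega) (by omega)
    have hc : ((i + 1 : ℕ) : ℤ) = (i : ℤ) + 1 := by push_cast; ring
    rw [hc]
    omega

lemma unique_edge {N : ℕ} {M : Finset ((ℤ × ℤ) × (ℤ × ℤ))} (hM : IsDimerCover N M)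
    {e e' : (ℤ × ℤ) × (ℤ × ℤ)} (he : e ∈ M) (he' : e' ∈ M) (h2 : e.2 = e'.2) :
    e = e' := by
  have hb : AzBlack N e.2 := (hM.1 e he).2.1
  have hcard := hM.2.2 e.2 hb
  have hmem : e ∈ M.filter (fun x => x.2 = e.2) := Finset.mem_filter.mpr ⟨he, rfl⟩
  have hmem' : e' ∈ M.filter (fun x => x.2 = e.2) := Finset.mem_filter.mpr ⟨he', h2.symm⟩
  exact Finset.card_le_one.mp (le_of_eq hcard) e hmem e' hmem'

lemma bridge {N : ℕ} {M : Finset ((ℤ × ℤ) × (ℤ × ℤ))} (hM : IsDimerCover N M)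
    (i : ℤ) :
    ((Finset.range N).filter
        (fun j => SWmatched M (2 * i, 2 * (j : ℤ) + 1))).card = Fc M i := by
  have hset : (Finset.range N).filter
      (fun j => SWmatched M (2 * i, 2 * (j : ℤ) + 1))
      = (M.filter (fun e => e.2.1 = 2 * i ∧ e.1.1 = 2 * i + 1)).image
          (fun e => (e.2.2 - 1) / 2) := by
    ext j
    simp only [Finset.mem_filter, Finset.pure_def, Finset.bind_def,
      Finset.sup_singleton_apply, Finset.mem_image, Finset.mem_range, SWmatched]
    constructor
    · rintro ⟨⟨a, haN, haj⟩, e, heM, he2, he11⟩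
      refine ⟨e, ⟨heM, ?_, ?_⟩, ?_⟩
      · rw [he2]
      · exact he11
      · rw [he2]
        simp only
        omega
    · rintro ⟨e, ⟨heM, he2, he11⟩, hfe⟩
      obtain ⟨_, ⟨i', j', _, _, hj0, hjN', hb⟩, _, _⟩ := hM.1 e heM
      rw [hb] at he2 hfe
      simp only at he2 hfe
      refine ⟨⟨j'.toNat, by omega, by omega⟩, e, heM, ?_, ?_⟩
      · rw [hb]
        simp only [Prod.mk.injEq]
        omega
      · simpa using he11
  rw [hset, Fc]
  apply Finset.card_image_of_injOn
  intro e heS e' heS' hfe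
  obtain ⟨heM, he2, _⟩ := Finset.mem_filter.mp heS
  obtain ⟨heM', he2', _⟩ := Finset.mem_filter.mp heS'
  apply unique_edge hM heM heM'
  obtain ⟨_, ⟨i1, j1, _, _, hj10, _, hb1⟩, _, _⟩ := hM.1 e heM
  obtain ⟨_, ⟨i2, j2, _, _, hj20, _, hb2⟩, _, _⟩ := hM.1 e' heM'
  rw [hb1] at he2
  rw [hb2] at he2'
  simp only [hb1, hb2] at hfe ⊢
  simp only at he2 he2'
  simp only [Prod.mk.injEq]
  omega

theorem stmt_11 (N : ℕ) (M : Finset ((ℤ × ℤ) × (ℤ × ℤ))) (hM : IsDimerCover N M)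
    (i : ℕ) (hi : i ≤ N) :
    ((Finset.range N).filter
        (fun j => SWmatched M (2 * (i : ℤ), 2 * (j : ℤ) + 1))).card = N - i := by
  rw [bridge hM (i : ℤ)]
  exact F_val hM i hi
end

section
/- Fix a dimer cover of the Aztec diamond graph of size N, and for 1 ≤ s ≤ t ≤ N let u_s^t denote the vertical coordinate-index of the s-th lowest black vertex on level 2(N - t) matched to a south or west edge (so the particle positions on level N-t are u_1^t ≤ … ≤ u_t^t). Then the particles interlace: u_s^{t+1} ≤ u_s^t ≤ u_{s+1}^{t+1} for all 1 ≤ s ≤ t ≤ N-1. -/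
open scoped Classical

/-- The black vertex `(x, 2j+1)` is matched by `M` to a south or west edge. -/
def SWparticle (M : Finset ((ℤ × ℤ) × (ℤ × ℤ))) (x j : ℤ) : Prop :=
  ∃ e ∈ M, e.2 = (x, 2 * j + 1) ∧ e.1.1 = x + 1

/-- choice of the edge matching a given white vertex -/
noncomputable def wE (M : Finset ((ℤ × ℤ) × (ℤ × ℤ))) (w : ℤ × ℤ) : (ℤ × ℤ) × (ℤ × ℤ) :=
  if h : ∃ e ∈ M, e.1 = w then h.choose else ((0, 0), (0, 0))

/-- choice of the edge matching a given black vertex -/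
noncomputable def bE (M : Finset ((ℤ × ℤ) × (ℤ × ℤ))) (b : ℤ × ℤ) : (ℤ × ℤ) × (ℤ × ℤ) :=
  if h : ∃ e ∈ M, e.2 = b then h.choose else ((0, 0), (0, 0))

lemma wE_spec {M : Finset ((ℤ × ℤ) × (ℤ × ℤ))} {w : ℤ × ℤ}
    (h : ∃ e ∈ M, e.1 = w) : wE M w ∈ M ∧ (wE M w).1 = w := by
  rw [wE, dif_pos h]
  exact ⟨h.choose_spec.1, h.choose_spec.2⟩

lemma bE_spec {M : Finset ((ℤ × ℤ) × (ℤ × ℤ))} {b : ℤ × ℤ}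
    (h : ∃ e ∈ M, e.2 = b) : bE M b ∈ M ∧ (bE M b).2 = b := by
  rw [bE, dif_pos h]
  exact ⟨h.choose_spec.1, h.choose_spec.2⟩

variable {N : ℕ} {M : Finset ((ℤ × ℤ) × (ℤ × ℤ))}

lemma white_ex (hM : IsDimerCover N M) {w : ℤ × ℤ} (hw : AzWhite N w) :
    ∃ e ∈ M, e.1 = w := by
  have h := hM.2.1 w hw
  have hne : (M.filter (fun e => e.1 = w)).Nonempty := Finset.card_pos.mp (by omega)
  obtain ⟨e, he⟩ := hne
  exact ⟨e, (Finset.mem_filter.mp he).1, (Finset.mem_filter.mp he).2⟩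

lemma black_ex (hM : IsDimerCover N M) {b : ℤ × ℤ} (hb : AzBlack N b) :
    ∃ e ∈ M, e.2 = b := by
  have h := hM.2.2 b hb
  have hne : (M.filter (fun e => e.2 = b)).Nonempty := Finset.card_pos.mp (by omega)
  obtain ⟨e, he⟩ := hne
  exact ⟨e, (Finset.mem_filter.mp he).1, (Finset.mem_filter.mp he).2⟩

lemma white_uniq (hM : IsDimerCover N M) {w : ℤ × ℤ} (hw : AzWhite N w)
    {e e' : (ℤ × ℤ) × (ℤ × ℤ)} (he : e ∈ M) (h1 : e.1 = w) (he' : e' ∈ M) (h1' : e'.1 = w) :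
    e = e' := by
  have h := hM.2.1 w hw
  exact Finset.card_le_one.mp h.le e (Finset.mem_filter.mpr ⟨he, h1⟩)
    e' (Finset.mem_filter.mpr ⟨he', h1'⟩)

lemma black_uniq (hM : IsDimerCover N M) {b : ℤ × ℤ} (hb : AzBlack N b)
    {e e' : (ℤ × ℤ) × (ℤ × ℤ)} (he : e ∈ M) (h1 : e.2 = b) (he' : e' ∈ M) (h1' : e'.2 = b) :
    e = e' := by
  have h := hM.2.2 b hb
  exact Finset.card_le_one.mp h.le e (Finset.mem_filter.mpr ⟨he, h1⟩)
    e' (Finset.mem_filter.mpr ⟨he', h1'⟩)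

lemma SW_bound (hM : IsDimerCover N M) {x j : ℤ} (h : SWparticle M x j) :
    0 ≤ j ∧ j ≤ (N : ℤ) - 1 := by
  obtain ⟨e, he, h2, -⟩ := h
  obtain ⟨i, j', _, _, hj0, hjN, hb⟩ := (hM.1 e he).2.1
  rw [h2] at hb
  have : (2 : ℤ) * j + 1 = 2 * j' + 1 := congrArg Prod.snd hb
  omega

lemma key (hM : IsDimerCover N M) (t : ℕ) (ht1 : 1 ≤ t) (htN : (t : ℤ) + 1 ≤ N)
    (k : ℤ) (hk0 : 0 ≤ k) (hkN : k ≤ (N : ℤ) - 1) :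
    ((Finset.Icc (0:ℤ) k).filter (fun j => SWparticle M (2*((N:ℤ)-t)) j)).card ≤
      ((Finset.Icc (0:ℤ) k).filter (fun j => SWparticle M (2*((N:ℤ)-t)-2) j)).card ∧
    ((Finset.Icc (0:ℤ) k).filter (fun j => SWparticle M (2*((N:ℤ)-t)-2) j)).card ≤
      ((Finset.Icc (0:ℤ) k).filter (fun j => SWparticle M (2*((N:ℤ)-t)) j)).card + 1 := by
  set x : ℤ := 2*((N:ℤ)-t) with hx
  set A : Finset ℤ := (Finset.Icc (0:ℤ) k).filter (fun j => SWparticle M x j) with hA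
  set B : Finset ℤ := (Finset.Icc (0:ℤ) k).filter (fun j => SWparticle M (x-2) j) with hB
  set C : Finset ℤ := (Finset.Icc (0:ℤ) k).filter (fun j => ¬ SWparticle M x j) with hC
  have hAC : A.card + C.card = (Finset.Icc (0:ℤ) k).card :=
    Finset.card_filter_add_card_filter_not _
  have hIcc : (Finset.Icc (0:ℤ) k).card = (k+1).toNat := by
    rw [Int.card_Icc]; congr 1; ring
  have hIcc2 : (Finset.Icc (0:ℤ) (k+1)).card = (k+2).toNat := by
    rw [Int.card_Icc]; congr 1; ring
  -- facts about the edge matched to each white vertex (x-1, 2m), 0 ≤ m ≤ k+1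
  have hW : ∀ m : ℤ, 0 ≤ m → m ≤ k + 1 →
      ∃ j : ℤ, wE M (x-1, 2*m) ∈ M ∧ (wE M (x-1, 2*m)).1 = (x-1, 2*m) ∧
        0 ≤ j ∧ m - 1 ≤ j ∧ j ≤ m ∧ (wE M (x-1, 2*m)).2.2 = 2*j+1 ∧
        ((wE M (x-1, 2*m)).2.1 = x - 2 ∨ (wE M (x-1, 2*m)).2.1 = x) := by
    intro m hm0 hm1
    have hw : AzWhite N ((x-1 : ℤ), 2*m) := by
      refine ⟨(N:ℤ) - t - 1, m, by omega, by omega, hm0, by omega, ?_⟩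
      simp only [Prod.mk.injEq, hx]
      exact ⟨by ring, trivial⟩
    obtain ⟨heM, he1⟩ := wE_spec (white_ex hM hw)
    obtain ⟨-, hbB, hd1, hd2⟩ := hM.1 _ heM
    obtain ⟨i, j, hi0, hiN, hj0, hjN, hbeq⟩ := hbB
    have he21 : (wE M (x-1, 2*m)).2.1 = 2*i := congrArg Prod.fst hbeq
    have he22 : (wE M (x-1, 2*m)).2.2 = 2*j+1 := congrArg Prod.snd hbeq
    have he11 : (wE M (x-1, 2*m)).1.1 = x - 1 := congrArg Prod.fst he1
    have he12 : (wE M (x-1, 2*m)).1.2 = 2*m := congrArg Prod.snd he1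
    have hd1' := (abs_eq (by norm_num : (0:ℤ) ≤ 1)).mp hd1
    have hd2' := (abs_eq (by norm_num : (0:ℤ) ≤ 1)).mp hd2
    exact ⟨j, heM, he1, hj0, by omega, by omega, he22, by omega⟩
  -- First inequality: A.card ≤ B.card
  have h1 : A.card ≤ B.card := by
    have hTcard : (B.image (fun j => ((x-2 : ℤ), j)) ∪ C.image (fun j => (x, j))).card
        ≤ B.card + C.card :=
      le_trans (Finset.card_union_le _ _)
        (add_le_add Finset.card_image_le Finset.card_image_le)
    have hinj : (Finset.Icc (0:ℤ) k).card ≤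
        (B.image (fun j => ((x-2 : ℤ), j)) ∪ C.image (fun j => (x, j))).card := by
      apply Finset.card_le_card_of_injOn
        (fun m => ((wE M (x-1, 2*m)).2.1, ((wE M (x-1, 2*m)).2.2 - 1)/2))
      · intro m hm
        rw [Finset.mem_coe, Finset.mem_Icc] at hm
        obtain ⟨j, heM, he1, hj0, hjm1, hjm, he22, hcase⟩ := hW m hm.1 (by omega)
        have he11 : (wE M (x-1, 2*m)).1.1 = x - 1 := congrArg Prod.fst he1
        have hdiv : ((wE M (x-1, 2*m)).2.2 - 1)/2 = j := by omega
        simp only [hdiv]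
        have he2pair : (wE M (x-1, 2*m)).2
            = ((wE M (x-1, 2*m)).2.1, (2*j+1 : ℤ)) := by
          rw [← he22]
        rcases hcase with hc | hc
        · apply Finset.mem_union_left
          apply Finset.mem_image.mpr
          refine ⟨j, ?_, by rw [hc]⟩
          apply Finset.mem_filter.mpr
          refine ⟨Finset.mem_Icc.mpr ⟨hj0, by omega⟩, ?_⟩
          refine ⟨wE M (x-1, 2*m), heM, ?_, by omega⟩
          rw [he2pair, hc]
        · apply Finset.mem_union_right
          apply Finset.mem_image.mpr
          refine ⟨j, ?_, by rw [hc]⟩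
          apply Finset.mem_filter.mpr
          refine ⟨Finset.mem_Icc.mpr ⟨hj0, by omega⟩, ?_⟩
          intro hsw
          obtain ⟨e', he'M, he'2, he'11⟩ := hsw
          have hbb : AzBlack N ((x : ℤ), 2*j+1) := by
            have hAB := (hM.1 _ heM).2.1
            rwa [he2pair, hc] at hAB
          have heq : wE M (x-1, 2*m) = e' := by
            apply black_uniq hM hbb heM ?_ he'M he'2
            rw [he2pair, hc]
          rw [← heq] at he'11
          omega
      · intro m hm m' hm' hfeq
        simp only at hfeq
        simp only [Finset.coe_Icc, Set.mem_Icc] at hm hm'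
        obtain ⟨j, heM, he1, hj0, hjm1, hjm, he22, hcase⟩ := hW m hm.1 (by omega)
        obtain ⟨j', heM', he1', hj0', hjm1', hjm', he22', hcase'⟩ := hW m' hm'.1 (by omega)
        rw [Prod.mk.injEq] at hfeq
        obtain ⟨hfst, hsnd0⟩ := hfeq
        have hsnd : (wE M (x-1, 2*m)).2.2 = (wE M (x-1, 2*m')).2.2 := by omega
        have hb2 : (wE M (x-1, 2*m)).2 = (wE M (x-1, 2*m')).2 := Prod.ext hfst hsnd
        have hbb : AzBlack N (wE M (x-1, 2*m')).2 := (hM.1 _ heM').2.1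
        have heq : wE M (x-1, 2*m) = wE M (x-1, 2*m') := 
          black_uniq hM hbb heM hb2 heM' rfl
        have hweq : ((x-1 : ℤ), 2*m) = ((x-1 : ℤ), (2*m' : ℤ)) := by
          rw [← he1, ← he1', heq]
        rw [Prod.mk.injEq] at hweq
        omega
    omega
  -- Second inequality: B.card ≤ A.card + 1
  have h2 : B.card ≤ A.card + 1 := by
    have hdisj : Disjoint (B.image (fun j => ((x-2 : ℤ), j))) (C.image (fun j => (x, j))) := by
      rw [Finset.disjoint_left]
      rintro p hp hp'
      obtain ⟨a, -, rfl⟩ := Finset.mem_image.mp hp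
      obtain ⟨b, -, hb⟩ := Finset.mem_image.mp hp'
      rw [Prod.mk.injEq] at hb
      omega
    have hScard : (B.image (fun j => ((x-2 : ℤ), j)) ∪ C.image (fun j => (x, j))).card
        = B.card + C.card := by
      have him : ∀ (c : ℤ) (s : Finset ℤ), (s.image fun j => ((c : ℤ), j)).card = s.card := by
        intro c s
        apply Finset.card_image_of_injective
        intro a b hab
        simp only [Prod.mk.injEq] at hab
        exact hab.2
      rw [Finset.card_union_of_disjoint hdisj, him, him]
    set S : Finset (ℤ × ℤ) :=
      B.image (fun j => ((x-2 : ℤ), j)) ∪ C.image (fun j => (x, j)) with hS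
    -- facts about the matched edge for blacks corresponding to S
    have hSfact : ∀ p ∈ S, bE M (p.1, 2*p.2+1) ∈ M ∧
        (bE M (p.1, 2*p.2+1)).2 = (p.1, 2*p.2+1) ∧
        (bE M (p.1, 2*p.2+1)).1.1 = x - 1 ∧ 0 ≤ p.2 ∧ p.2 ≤ k := by
      intro p hp
      rcases Finset.mem_union.mp hp with hp | hp
      · obtain ⟨j, hj, rfl⟩ := Finset.mem_image.mp hp
        obtain ⟨hjIcc, hsw⟩ := Finset.mem_filter.mp hj
        rw [Finset.mem_Icc] at hjIcc
        obtain ⟨e', he'M, he'2, he'11⟩ := hsw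
        have hex : ∃ e ∈ M, e.2 = ((x - 2 : ℤ), 2*j+1) := ⟨e', he'M, he'2⟩
        obtain ⟨heM, he2⟩ := bE_spec hex
        have hbb : AzBlack N ((x-2 : ℤ), 2*j+1) := by
          have hAB := (hM.1 e' he'M).2.1
          rwa [he'2] at hAB
        have heq : bE M ((x-2 : ℤ), 2*j+1) = e' := black_uniq hM hbb heM he2 he'M he'2
        refine ⟨heM, he2, ?_, hjIcc.1, hjIcc.2⟩
        rw [heq, he'11]; ring
      · obtain ⟨j, hj, rfl⟩ := Finset.mem_image.mp hp
        obtain ⟨hjIcc, hnsw⟩ := Finset.mem_filter.mp hj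
        rw [Finset.mem_Icc] at hjIcc
        have hbb : AzBlack N ((x : ℤ), 2*j+1) := by
          refine ⟨(N:ℤ) - t, j, by omega, by omega, hjIcc.1, by omega, ?_⟩
          rw [hx]
        obtain ⟨heM, he2⟩ := bE_spec (black_ex hM hbb)
        obtain ⟨-, -, hd1, -⟩ := hM.1 _ heM
        have he21 : (bE M ((x : ℤ), 2*j+1)).2.1 = x := congrArg Prod.fst he2
        have hd1' := (abs_eq (by norm_num : (0:ℤ) ≤ 1)).mp hd1
        have hcol : (bE M ((x : ℤ), 2*j+1)).1.1 = x - 1 := by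
          rcases hd1' with h | h
          · exact absurd ⟨_, heM, he2, by omega⟩ hnsw
          · omega
        exact ⟨heM, he2, hcol, hjIcc.1, hjIcc.2⟩
    have hinj2 : S.card ≤ (Finset.Icc (0:ℤ) (k+1)).card := by
      apply Finset.card_le_card_of_injOn (fun p => (bE M (p.1, 2*p.2+1)).1.2 / 2)
      · intro p hp
        obtain ⟨heM, he2, hcol, hj0, hjk⟩ := hSfact p hp
        obtain ⟨hwW, -, -, hd2⟩ := hM.1 _ heM
        obtain ⟨i', j', -, -, hj0', -, hweq⟩ := hwW
        have he12 : (bE M (p.1, 2*p.2+1)).1.2 = 2*j' := congrArg Prod.snd hweq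
        have he22 : (bE M (p.1, 2*p.2+1)).2.2 = 2*p.2+1 := congrArg Prod.snd he2
        have hd2' := (abs_eq (by norm_num : (0:ℤ) ≤ 1)).mp hd2
        simp only [Finset.mem_coe, Finset.mem_Icc]
        constructor <;> omega
      · intro p hp p' hp' hgeq
        simp only at hgeq
        obtain ⟨heM, he2, hcol, hj0, hjk⟩ := hSfact p hp
        obtain ⟨heM', he2', hcol', hj0', hjk'⟩ := hSfact p' hp'
        have hwW := (hM.1 _ heM).1
        have hwW' := (hM.1 _ heM').1
        obtain ⟨i1, j1, -, -, -, -, hweq1⟩ := hwW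
        obtain ⟨i2, j2, -, -, -, -, hweq2⟩ := hwW'
        have he12 : (bE M (p.1, 2*p.2+1)).1.2 = 2*j1 := congrArg Prod.snd hweq1
        have he12' : (bE M (p'.1, 2*p'.2+1)).1.2 = 2*j2 := congrArg Prod.snd hweq2
        have hsnd : (bE M (p.1, 2*p.2+1)).1.2 = (bE M (p'.1, 2*p'.2+1)).1.2 := by omega
        have hw1 : (bE M (p.1, 2*p.2+1)).1 = (bE M (p'.1, 2*p'.2+1)).1 :=
          Prod.ext (by rw [hcol, hcol']) hsnd
        have heq : bE M (p.1, 2*p.2+1) = bE M (p'.1, 2*p'.2+1) := by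
          apply white_uniq hM ?_ heM hw1 heM' rfl
          exact (hM.1 _ heM').1
        have hb : (p.1, (2*p.2+1 : ℤ)) = (p'.1, (2*p'.2+1 : ℤ)) := by
          rw [← he2, ← he2', heq]
        rw [Prod.mk.injEq] at hb
        exact Prod.ext hb.1 (by omega)
    omega
  exact ⟨h1, h2⟩

lemma mono_all {u : ℕ → ℕ → ℤ} {t' : ℕ}
    (h : ∀ s, 1 ≤ s → s < t' → u s t' < u (s + 1) t') :
    ∀ a b, 1 ≤ a → a < b → b ≤ t' → u a t' < u b t' := by
  intro a b ha hab hb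
  induction b with
  | zero => omega
  | succ n ih =>
    rcases Nat.lt_or_ge a n with h1 | h2
    · exact lt_trans (ih (by omega) (by omega)) (h n (by omega) (by omega))
    · have han : a = n := by omega
      subst han
      exact h a ha (by omega)

lemma enum_card (hM : IsDimerCover N M) (u : ℕ → ℕ → ℤ) (t' : ℕ) (x : ℤ)
    (hmono' : ∀ a b, 1 ≤ a → a < b → b ≤ t' → u a t' < u b t')
    (henum' : ∀ j : ℤ, SWparticle M x j ↔ ∃ s', 1 ≤ s' ∧ s' ≤ t' ∧ u s' t' = j)
    (k : ℤ) :
    ((Finset.Icc 1 t').filter (fun s' => u s' t' ≤ k)).card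
      = ((Finset.Icc (0:ℤ) k).filter (fun j => SWparticle M x j)).card := by
  apply Finset.card_bij (fun s' _ => u s' t')
  · intro s' hs'
    obtain ⟨hIcc, hle⟩ := Finset.mem_filter.mp hs'
    rw [Finset.mem_Icc] at hIcc
    have hsw : SWparticle M x (u s' t') := (henum' _).mpr ⟨s', hIcc.1, hIcc.2, rfl⟩
    have hpos := (SW_bound hM hsw).1
    exact Finset.mem_filter.mpr ⟨Finset.mem_Icc.mpr ⟨hpos, hle⟩, hsw⟩
  · intro a ha b hb h
    obtain ⟨haI, -⟩ := Finset.mem_filter.mp ha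
    obtain ⟨hbI, -⟩ := Finset.mem_filter.mp hb
    rw [Finset.mem_Icc] at haI hbI
    by_contra hne
    rcases lt_or_gt_of_ne hne with hlt | hlt
    · exact absurd h (ne_of_lt (hmono' a b haI.1 hlt hbI.2))
    · exact absurd h.symm (ne_of_lt (hmono' b a hbI.1 hlt haI.2))
  · intro j hj
    obtain ⟨hIcc, hsw⟩ := Finset.mem_filter.mp hj
    rw [Finset.mem_Icc] at hIcc
    obtain ⟨s', h1, h2, h3⟩ := (henum' j).mp hsw
    exact ⟨s', Finset.mem_filter.mpr ⟨Finset.mem_Icc.mpr ⟨h1, h2⟩, by omega⟩, h3⟩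

theorem stmt_12 (N : ℕ) (M : Finset ((ℤ × ℤ) × (ℤ × ℤ))) (hM : IsDimerCover N M)
    (u : ℕ → ℕ → ℤ)
    -- for each level `t`, `u · t` strictly increasingly enumerates the
    -- particle positions on level `2(N - t)`
    (hmono : ∀ t, 1 ≤ t → t ≤ N → ∀ s, 1 ≤ s → s < t → u s t < u (s + 1) t)
    (henum : ∀ t, 1 ≤ t → t ≤ N → ∀ j : ℤ,
      SWparticle M (2 * ((N : ℤ) - t)) j ↔ ∃ s, 1 ≤ s ∧ s ≤ t ∧ u s t = j) :
    ∀ t s, 1 ≤ s → s ≤ t → t ≤ N - 1 →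
      u s (t + 1) ≤ u s t ∧ u s t ≤ u (s + 1) (t + 1) := by
  intro t s hs1 hst htN1
  have ht1 : 1 ≤ t := le_trans hs1 hst
  have htN : t + 1 ≤ N := by omega
  have hlev : (2 : ℤ) * ((N:ℤ) - ((t+1 : ℕ) : ℤ)) = 2*((N:ℤ) - (t:ℤ)) - 2 := by
    push_cast; ring
  have hmt : ∀ a b, 1 ≤ a → a < b → b ≤ t → u a t < u b t :=
    mono_all (hmono t ht1 (by omega))
  have hmt1 : ∀ a b, 1 ≤ a → a < b → b ≤ t + 1 → u a (t+1) < u b (t+1) :=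
    mono_all (hmono (t+1) (by omega) htN)
  have henumt := henum t ht1 (by omega)
  have henumt1 : ∀ j : ℤ, SWparticle M (2*((N:ℤ) - (t:ℤ)) - 2) j ↔
      ∃ s', 1 ≤ s' ∧ s' ≤ t + 1 ∧ u s' (t+1) = j := by
    intro j
    rw [← hlev]
    exact henum (t+1) (by omega) htN j
  have hAeq : ∀ k : ℤ, ((Finset.Icc 1 t).filter (fun s' => u s' t ≤ k)).card
      = ((Finset.Icc (0:ℤ) k).filter (fun j => SWparticle M (2*((N:ℤ)-(t:ℤ))) j)).card :=
    enum_card hM u t _ hmt henumt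
  have hBeq : ∀ k : ℤ, ((Finset.Icc 1 (t+1)).filter (fun s' => u s' (t+1) ≤ k)).card
      = ((Finset.Icc (0:ℤ) k).filter (fun j => SWparticle M (2*((N:ℤ)-(t:ℤ))-2) j)).card :=
    enum_card hM u (t+1) _ hmt1 henumt1
  have hkey : ∀ k : ℤ, 0 ≤ k → k ≤ (N:ℤ) - 1 →
      ((Finset.Icc 1 t).filter (fun s' => u s' t ≤ k)).card ≤
        ((Finset.Icc 1 (t+1)).filter (fun s' => u s' (t+1) ≤ k)).card ∧
      ((Finset.Icc 1 (t+1)).filter (fun s' => u s' (t+1) ≤ k)).card ≤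
        ((Finset.Icc 1 t).filter (fun s' => u s' t ≤ k)).card + 1 := by
    intro k hk0 hkN
    rw [hAeq, hBeq]
    exact key hM t ht1 (by exact_mod_cast htN) k hk0 hkN
  have hbndt : ∀ s', 1 ≤ s' → s' ≤ t → 0 ≤ u s' t ∧ u s' t ≤ (N:ℤ) - 1 :=
    fun s' h1 h2 => SW_bound hM ((henumt _).mpr ⟨s', h1, h2, rfl⟩)
  have hbndt1 : ∀ s', 1 ≤ s' → s' ≤ t + 1 → 0 ≤ u s' (t+1) ∧ u s' (t+1) ≤ (N:ℤ) - 1 :=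
    fun s' h1 h2 => SW_bound hM ((henumt1 _).mpr ⟨s', h1, h2, rfl⟩)
  constructor
  · -- u s (t+1) ≤ u s t
    by_contra hcon
    push_neg at hcon
    have hk := hbndt s hs1 hst
    have hAs : s ≤ ((Finset.Icc 1 t).filter (fun s' => u s' t ≤ u s t)).card := by
      have hsub : Finset.Icc 1 s ⊆ (Finset.Icc 1 t).filter (fun s' => u s' t ≤ u s t) := by
        intro s' hs'
        rw [Finset.mem_Icc] at hs'
        refine Finset.mem_filter.mpr ⟨Finset.mem_Icc.mpr ⟨hs'.1, le_trans hs'.2 hst⟩, ?_⟩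
        rcases eq_or_lt_of_le hs'.2 with h | h
        · rw [h]
        · exact (hmt s' s hs'.1 h hst).le
      have := Finset.card_le_card hsub
      rwa [Nat.card_Icc, Nat.add_sub_cancel] at this
    have hBs := le_trans hAs (hkey (u s t) hk.1 hk.2).1
    have hsub2 : (Finset.Icc 1 (t+1)).filter (fun s' => u s' (t+1) ≤ u s t)
        ⊆ Finset.Icc 1 (s-1) := by
      intro s' hs'
      obtain ⟨hI, hle⟩ := Finset.mem_filter.mp hs'
      rw [Finset.mem_Icc] at hI
      rw [Finset.mem_Icc]
      refine ⟨hI.1, ?_⟩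
      by_contra hge
      push_neg at hge
      have hss' : s ≤ s' := by omega
      have : u s t < u s' (t+1) := by
        rcases eq_or_lt_of_le hss' with h | h
        · rw [← h]; exact hcon
        · exact lt_trans hcon (hmt1 s s' hs1 h hI.2)
      omega
    have := Finset.card_le_card hsub2
    rw [Nat.card_Icc, Nat.add_sub_cancel] at this
    omega
  · -- u s t ≤ u (s+1) (t+1)
    by_contra hcon
    push_neg at hcon
    have hk := hbndt1 (s+1) (by omega) (by omega)
    have hBs : s + 1 ≤ ((Finset.Icc 1 (t+1)).filter
        (fun s' => u s' (t+1) ≤ u (s+1) (t+1))).card := by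
      have hsub : Finset.Icc 1 (s+1) ⊆ (Finset.Icc 1 (t+1)).filter
          (fun s' => u s' (t+1) ≤ u (s+1) (t+1)) := by
        intro s' hs'
        rw [Finset.mem_Icc] at hs'
        refine Finset.mem_filter.mpr ⟨Finset.mem_Icc.mpr ⟨hs'.1, by omega⟩, ?_⟩
        rcases eq_or_lt_of_le hs'.2 with h | h
        · rw [h]
        · exact (hmt1 s' (s+1) hs'.1 h (by omega)).le
      have := Finset.card_le_card hsub
      rwa [Nat.card_Icc, Nat.add_sub_cancel] at this
    have hsub2 : (Finset.Icc 1 t).filter (fun s' => u s' t ≤ u (s+1) (t+1))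
        ⊆ Finset.Icc 1 (s-1) := by
      intro s' hs'
      obtain ⟨hI, hle⟩ := Finset.mem_filter.mp hs'
      rw [Finset.mem_Icc] at hI
      rw [Finset.mem_Icc]
      refine ⟨hI.1, ?_⟩
      by_contra hge
      push_neg at hge
      have hss' : s ≤ s' := by omega
      have : u (s+1) (t+1) < u s' t := by
        rcases eq_or_lt_of_le hss' with h | h
        · rw [← h]; exact hcon
        · exact lt_trans hcon (hmt s s' hs1 h hI.2)
      omega
    have hAle := Finset.card_le_card hsub2
    rw [Nat.card_Icc, Nat.add_sub_cancel] at hAle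
    have := (hkey (u (s+1) (t+1)) hk.1 hk.2).2
    omega
end
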